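/- The subgroup K has index 16 in Γ; the quotient Γ/K is isomorphic to the group presented by ⟨a, b, d | a² = b² = d² = (ab)² = (bd)² = (ad)⁴ = 1⟩ (via a ↦ aK, b ↦ bK, d ↦ dK); moreover Γ/K is the internal direct product of the subgroup ⟨bK⟩ of order 2 and the subgroup ⟨aK, dK⟩, which is a dihedral group of order 8. -/

import Mathlib

set_option maxHeartbeats 1000000

attribute [local instance] Classical.propDecidable

noncomputable section

namespace Grig

/-! ### The Grigorchuk group -/

/-- The action of the generator `a` on vertices (finite binary words). -/
def aFun : List Bool → List Bool
  | [] => []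
  | x :: w => (!x) :: w

lemma aFun_invol : ∀ w, aFun (aFun w) = w := by
  intro w; cases w <;> simp [aFun]

/-- States of the automaton generating `b`, `c`, `d`. -/
inductive St | B | C | D

/-- The actions of `b`, `c`, `d` on vertices. -/
def stFun : St → List Bool → List Bool
  | _, [] => []
  | .B, false :: w => false :: aFun w
  | .B, true :: w => true :: stFun .C w
  | .C, false :: w => false :: aFun w
  | .C, true :: w => true :: stFun .D w
  | .D, false :: w => false :: w
  | .D, true :: w => true :: stFun .B w

lemma stFun_invol : ∀ (s : St) (w : List Bool), stFun s (stFun s w) = w := by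
  intro s w
  induction w generalizing s with
  | nil => cases s <;> rfl
  | cons x w ih => cases s <;> cases x <;> simp [stFun, aFun_invol, ih]

/-- The automorphism `a` of the binary rooted tree. -/
def a : Equiv.Perm (List Bool) := ⟨aFun, aFun, aFun_invol, aFun_invol⟩
/-- The automorphism `b`. -/
def b : Equiv.Perm (List Bool) := ⟨stFun .B, stFun .B, stFun_invol .B, stFun_invol .B⟩
/-- The automorphism `c`. -/
def c : Equiv.Perm (List Bool) := ⟨stFun .C, stFun .C, stFun_invol .C, stFun_invol .C⟩
/-- The automorphism `d`. -/
def d : Equiv.Perm (List Bool) := ⟨stFun .D, stFun .D, stFun_invol .D, stFun_invol .D⟩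

/-- The Grigorchuk group `Γ`, as the subgroup of the group of permutations of the
vertex set generated by the four automorphisms `a, b, c, d` (which indeed preserve word
length and initial segments, so `Γ` is a subgroup of `Aut(T)`). -/
def Grigorchuk : Subgroup (Equiv.Perm (List Bool)) := Subgroup.closure {a, b, c, d}

/-- `a` as an element of `Γ`. -/
def ga : Grigorchuk := ⟨a, Subgroup.subset_closure (by simp)⟩
/-- `b` as an element of `Γ`. -/
def gb : Grigorchuk := ⟨b, Subgroup.subset_closure (by simp)⟩
/-- `c` as an element of `Γ`. -/
def gc : Grigorchuk := ⟨c, Subgroup.subset_closure (by simp)⟩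
/-- `d` as an element of `Γ`. -/
def gd : Grigorchuk := ⟨d, Subgroup.subset_closure (by simp)⟩

/-- The first level stabilizer `St_Γ(1)` of `Γ`. -/
def St1 : Subgroup Grigorchuk where
  carrier := {g | (g : Equiv.Perm (List Bool)) [false] = [false] ∧
                  (g : Equiv.Perm (List Bool)) [true] = [true]}
  one_mem' := ⟨rfl, rfl⟩
  mul_mem' := by
    rintro g h ⟨hg1, hg2⟩ ⟨hh1, hh2⟩
    refine ⟨?_, ?_⟩ <;>
      simp only [Subgroup.coe_mul, Equiv.Perm.mul_apply, hh1, hh2, hg1, hg2]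
  inv_mem' := by
    rintro g ⟨hg1, hg2⟩
    refine ⟨?_, ?_⟩
    · conv_lhs => rw [← hg1]
      simp
    · conv_lhs => rw [← hg2]
      simp

/-- The subgroup `K`, the normal closure of `abab` in `Γ`. -/
def K : Subgroup Grigorchuk := Subgroup.normalClosure {ga * gb * ga * gb}

instance : K.Normal := Subgroup.normalClosure_normal

/-- The canonical projection `π_K : Γ → Γ/K`. -/
def piK : Grigorchuk →* Grigorchuk ⧸ K := QuotientGroup.mk' K

/-- `ψ_i(g)` (`i ∈ {0,1}`, encoded by `false`/`true`): the automorphism determined by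
`g(i·w) = i·ψ_i(g)(w)`, when it exists in `Γ` (it does for `g ∈ St_Γ(1)`);
junk value `1` otherwise. -/
def psiG (i : Bool) (g : Grigorchuk) : Grigorchuk :=
  if h : ∃ k : Grigorchuk, ∀ w : List Bool,
      (g : Equiv.Perm (List Bool)) (i :: w) = i :: (k : Equiv.Perm (List Bool)) w
  then h.choose else 1

/-- `ū`: the closest element of `St_Γ(1)`. -/
def bar (g : Grigorchuk) : Grigorchuk := if g ∈ St1 then g else g * ga

/-- The word length of `g ∈ Γ` with respect to the generating set `{a,b,c,d}`
(each generator is an involution, so inverses of generators are not needed). -/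
def wlen (g : Grigorchuk) : ℕ :=
  sInf {n | ∃ l : List Grigorchuk, l.length = n ∧
    (∀ x ∈ l, x ∈ ({ga, gb, gc, gd} : Set Grigorchuk)) ∧ l.prod = g}



/-! ### Words and equations over a group -/

/-- A letter: a constant from `G`, or a variable `x ∈ ℕ` with a sign
(`true` for `x`, `false` for `x⁻¹`). -/
abbrev Letter (G : Type*) := G ⊕ (ℕ × Bool)

/-- A word over `G` with variables: `W = u₁u₂⋯u_k`, `u_i ∈ G ∪ X^{±1}`. -/
abbrev Word (G : Type*) := List (Letter G)

variable {G : Type*} [Group G]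

/-- The constant letter. -/
def Cst (g : G) : Letter G := Sum.inl g
/-- The letter `x`. -/
def Vp {G : Type*} (x : ℕ) : Letter G := Sum.inr (x, true)
/-- The letter `x⁻¹`. -/
def Vm {G : Type*} (x : ℕ) : Letter G := Sum.inr (x, false)

/-- The element of the free product `G ∗ F_X` represented by a word. -/
def wordProd (W : Word G) : Monoid.Coprod G (FreeGroup ℕ) :=
  (W.map (fun u => match u with
    | Sum.inl g => Monoid.Coprod.inl g
    | Sum.inr (x, e) =>
        Monoid.Coprod.inr (if e then FreeGroup.of x else (FreeGroup.of x)⁻¹))).prod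

/-- Number of occurrences of the letter `x^ε` (`ε` given by `e`) in `W`. -/
def occ (W : Word G) (x : ℕ) (e : Bool) : ℕ :=
  W.countP (fun u => match u with
    | Sum.inr (y, f) => y == x && f == e
    | _ => false)

/-- Total number of occurrences of the variable `x` in `W` (occurrences of both
`x` and `x⁻¹` are counted). -/
def nocc (W : Word G) (x : ℕ) : ℕ := occ W x true + occ W x false

/-- `Var(W)`: the set of variables occurring in `W`. -/
def Vars (W : Word G) : Set ℕ := {x | nocc W x ≠ 0}

/-- A word is quadratic if every variable occurring in it occurs exactly twice. -/
def IsQuadratic (W : Word G) : Prop := ∀ x ∈ Vars W, nocc W x = 2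

/-- A word is orientable if every variable occurring in it occurs exactly once with
exponent `+1` and once with exponent `-1`. -/
def Orientable (W : Word G) : Prop := ∀ x ∈ Vars W, occ W x true = 1 ∧ occ W x false = 1

/-- Formal inverse of a word. -/
def wordInv (W : Word G) : Word G :=
  (W.map (fun u => match u with
    | Sum.inl g => Sum.inl g⁻¹
    | Sum.inr (x, e) => (Sum.inr (x, !e) : Letter G))).reverse

/-- The commutator word `[x,y] = x⁻¹y⁻¹xy`. -/
def comm {G : Type*} (x y : ℕ) : Word G := [Vm x, Vm y, Vp x, Vp y]
/-- The square word `x² = x·x`. -/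
def sq {G : Type*} (x : ℕ) : Word G := [Vp x, Vp x]
/-- The coefficient factor `z⁻¹cz`. -/
def cf (z : ℕ) (c : G) : Word G := [Vm z, Cst c, Vp z]

/-- Concatenation of a list of words. -/
def listJoin {α : Type*} (l : List (List α)) : List α := l.foldr (· ++ ·) []

/-- The commutator part `[x₁,y₁]⋯[x_g,y_g]`. -/
def commPart {G : Type*} (g : ℕ) (xs ys : Fin g → ℕ) : Word G :=
  listJoin (List.ofFn fun i => comm (xs i) (ys i))
/-- The square part `x₁²⋯x_g²`. -/
def sqPart {G : Type*} (g : ℕ) (xs : Fin g → ℕ) : Word G :=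
  listJoin (List.ofFn fun i => sq (xs i))
/-- The coefficient part `z₁⁻¹c₁z₁⋯z_m⁻¹c_mz_m`. -/
def coefPart (m : ℕ) (zs : Fin m → ℕ) (cs : Fin m → G) : Word G :=
  listJoin (List.ofFn fun i => cf (zs i) (cs i))

/-- The standard orientable quadratic word
`[x₁,y₁]⋯[x_g,y_g]·z₁⁻¹c₁z₁⋯z_m⁻¹c_mz_m`. -/
def stdOr (g m : ℕ) (xs ys : Fin g → ℕ) (zs : Fin m → ℕ) (cs : Fin m → G) : Word G :=
  commPart g xs ys ++ coefPart m zs cs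

/-- The standard non-orientable quadratic word
`x₁²⋯x_g²·z₁⁻¹c₁z₁⋯z_m⁻¹c_mz_m`. -/
def stdNonOr (g m : ℕ) (xs : Fin g → ℕ) (zs : Fin m → ℕ) (cs : Fin m → G) : Word G :=
  sqPart g xs ++ coefPart m zs cs

/-- The variables `x₁,…,x_g,y₁,…,y_g,z₁,…,z_m` are pairwise distinct. -/
def DistinctVars (g m : ℕ) (xs ys : Fin g → ℕ) (zs : Fin m → ℕ) : Prop :=
  Function.Injective (fun p : (Fin g ⊕ Fin g) ⊕ Fin m =>
    match p with
    | Sum.inl (Sum.inl i) => xs i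
    | Sum.inl (Sum.inr i) => ys i
    | Sum.inr i => zs i)

/-- The variables `x₁,…,x_g,z₁,…,z_m` are pairwise distinct. -/
def DistinctVarsN (g m : ℕ) (xs : Fin g → ℕ) (zs : Fin m → ℕ) : Prop :=
  Function.Injective (fun p : Fin g ⊕ Fin m =>
    match p with
    | Sum.inl i => xs i
    | Sum.inr i => zs i)

/-- `α : G ∗ F_X → G` is a `G`-homomorphism (identical on `G`). -/
def IsGHom (α : Monoid.Coprod G (FreeGroup ℕ) →* G) : Prop :=
  ∀ g : G, α (Monoid.Coprod.inl g) = g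

/-- The value of a homomorphism at a variable. -/
def xval (α : Monoid.Coprod G (FreeGroup ℕ) →* G) (x : ℕ) : G :=
  α (Monoid.Coprod.inr (FreeGroup.of x))

/-- The equation `W = 1` has a solution in `G`. -/
def Solvable (W : Word G) : Prop :=
  ∃ α : Monoid.Coprod G (FreeGroup ℕ) →* G, IsGHom α ∧ α (wordProd W) = 1

/-- The system of equations `{W = 1 | W ∈ Ws}` with constraint `γ` modulo `H`
has a solution in `G`. -/
def SolvableC (H : Subgroup G) [H.Normal] (Ws : List (Word G)) (γ : ℕ → G ⧸ H) : Prop :=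
  ∃ α : Monoid.Coprod G (FreeGroup ℕ) →* G, IsGHom α ∧
    (∀ W ∈ Ws, α (wordProd W) = 1) ∧
    ∀ x : ℕ, (∃ W ∈ Ws, x ∈ Vars W) → (QuotientGroup.mk' H) (xval α x) = γ x

/-- A finitely supported `G`-automorphism of `G ∗ F_X`. -/
def IsFinGAut (φ : Monoid.Coprod G (FreeGroup ℕ) ≃* Monoid.Coprod G (FreeGroup ℕ)) : Prop :=
  (∀ g : G, φ (Monoid.Coprod.inl g) = Monoid.Coprod.inl g) ∧
  {x : ℕ | φ (Monoid.Coprod.inr (FreeGroup.of x)) ≠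
      Monoid.Coprod.inr (FreeGroup.of x)}.Finite

/-- Two words are equivalent if some finitely supported `G`-automorphism sends (the
element of `G ∗ F_X` represented by) the first to a conjugate of the second. -/
def EquivWords (Wa Wb : Word G) : Prop :=
  ∃ φ : Monoid.Coprod G (FreeGroup ℕ) ≃* Monoid.Coprod G (FreeGroup ℕ),
    IsFinGAut φ ∧ IsConj (φ (wordProd Wa)) (wordProd Wb)

/-- The homomorphism `G ∗ F_X → G/H` extending a constraint `γ` (equal to `π_H` on `G`
and to `γ` on the variables). -/
def constraintHom (H : Subgroup G) [H.Normal] (γ : ℕ → G ⧸ H) :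
    Monoid.Coprod G (FreeGroup ℕ) →* G ⧸ H :=
  Monoid.Coprod.lift (QuotientGroup.mk' H) (FreeGroup.lift γ)

/-- Equivalence of constrained equations `(Wa = 1, γ)` and `(Wb = 1, ζ)`. -/
def EquivWordsC (H : Subgroup G) [H.Normal] (Wa : Word G) (γ : ℕ → G ⧸ H)
    (Wb : Word G) (ζ : ℕ → G ⧸ H) : Prop :=
  ∃ φ : Monoid.Coprod G (FreeGroup ℕ) ≃* Monoid.Coprod G (FreeGroup ℕ),
    IsFinGAut φ ∧ IsConj (φ (wordProd Wa)) (wordProd Wb) ∧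
    constraintHom H ζ = (constraintHom H γ).comp φ.toMonoidHom

/-- `W₁ #ₓ W₂`, for `W₁ = U₁ x^{ε₁} V₁` and `W₂ = U₂ x^{ε₂} V₂`:
the word `U₁ (V₂U₂)^{-ε₁ε₂} V₁`. -/
def joinAt (U₁ V₁ U₂ V₂ : Word G) (e₁ e₂ : Bool) : Word G :=
  U₁ ++ (if e₁ = e₂ then wordInv (V₂ ++ U₂) else V₂ ++ U₂) ++ V₁



/-! ### The splitting map `Ψ` for words over `Γ` -/

/-- The image `St_Γ(1)/K` in `Γ/K` (well defined since `K ⊆ St_Γ(1)`). -/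
def StQ : Subgroup (Grigorchuk ⧸ K) := St1.map (QuotientGroup.mk' K)

/-- The coset modulo `St_Γ(1)` of a letter, under the constraint `γ`
(`false` = trivial coset, `true` = nontrivial coset). -/
def letterBit (γ : ℕ → Grigorchuk ⧸ K) : Letter Grigorchuk → Bool
  | Sum.inl g => if g ∈ St1 then false else true
  | Sum.inr (x, _) => if γ x ∈ StQ then false else true

/-- `σ_γ(W)`: the coset modulo `St_Γ(1)` of a word, under the constraint `γ`
(`false` = trivial coset `1`). -/
def sigmaW (γ : ℕ → Grigorchuk ⧸ K) : Word Grigorchuk → Bool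
  | [] => false
  | u :: W => xor (letterBit γ u) (sigmaW γ W)

variable (d0 d1 : ℕ → ℕ)

/-- The descendant `x_j` of the variable `x` (given the two fixed injections). -/
def dsc (j : Bool) (x : ℕ) : ℕ := if j then d1 x else d0 x

/-- The letter of `Ψ_i(W)` replacing a letter of `W`, where `s` is the coset
`σ_γ(u₁⋯u_{i-1})` of the preceding prefix. -/
def psiLetter (γ : ℕ → Grigorchuk ⧸ K) (i : Bool) (s : Bool) :
    Letter Grigorchuk → Letter Grigorchuk
  | Sum.inl g => Sum.inl (if s then psiG i (ga * bar g * ga) else psiG i (bar g))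
  | Sum.inr (x, true) => Sum.inr (dsc d0 d1 (xor i s) x, true)
  | Sum.inr (x, false) =>
      Sum.inr (dsc d0 d1 (xor i (xor s (letterBit γ (Sum.inr (x, false))))) x, false)

/-- Auxiliary recursion for `Ψ_i`, carrying the coset of the processed prefix. -/
def psiGo (γ : ℕ → Grigorchuk ⧸ K) (i : Bool) : Bool → Word Grigorchuk → Word Grigorchuk
  | _, [] => []
  | s, u :: W => psiLetter d0 d1 γ i s u :: psiGo γ i (xor s (letterBit γ u)) W

/-- The splitting `Ψ_i(W)` of a word `W` with respect to the constraint `γ`. -/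
def PsiW (γ : ℕ → Grigorchuk ⧸ K) (i : Bool) (W : Word Grigorchuk) : Word Grigorchuk :=
  psiGo d0 d1 γ i false W

/-- `q̄` for `q ∈ Γ/K`: the closest element of `St_Γ(1)/K`. -/
def barQ (q : Grigorchuk ⧸ K) : Grigorchuk ⧸ K :=
  if q ∈ StQ then q else q * (QuotientGroup.mk' K ga)


end Grig

/-- The relator set of the presentation
`⟨a, b, d | a² = b² = d² = (ab)² = (bd)² = (ad)⁴ = 1⟩` (generators `0 ↦ a`, `1 ↦ b`,
`2 ↦ d`). -/
def Grig.grigRels : Set (FreeGroup (Fin 3)) :=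
  {(FreeGroup.of 0) ^ 2, (FreeGroup.of 1) ^ 2, (FreeGroup.of 2) ^ 2,
    (FreeGroup.of 0 * FreeGroup.of 1) ^ 2, (FreeGroup.of 1 * FreeGroup.of 2) ^ 2,
    (FreeGroup.of 0 * FreeGroup.of 2) ^ 4}


/-! ### Auxiliary development for Lemma 2.1 -/

section Aux

namespace Grig

/-! #### Length preservation and relations in `Γ` -/

lemma aFun_length : ∀ w, (aFun w).length = w.length := by
  intro w; cases w <;> simp [aFun]

lemma stFun_length : ∀ (s : St) (w : List Bool), (stFun s w).length = w.length := by
  intro s w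
  induction w generalizing s with
  | nil => cases s <;> rfl
  | cons x w ih => cases s <;> cases x <;> simp [stFun, aFun_length, ih]

lemma st_triple : ∀ w, stFun .B (stFun .D w) = stFun .C w ∧
    stFun .C (stFun .B w) = stFun .D w ∧ stFun .D (stFun .C w) = stFun .B w := by
  intro w
  induction w with
  | nil => exact ⟨rfl, rfl, rfl⟩
  | cons x w ih => cases x <;> simp [stFun, aFun_invol, ih.1, ih.2.1, ih.2.2]

lemma st_DB : ∀ w, stFun .D (stFun .B w) = stFun .C w := by
  intro w
  have h := (st_triple (stFun .B w)).2.1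
  rw [stFun_invol] at h
  exact h.symm

lemma adad : ∀ w,
    aFun (stFun .D (aFun (stFun .D (aFun (stFun .D (aFun (stFun .D w))))))) = w := by
  intro w
  cases w with
  | nil => rfl
  | cons x w => cases x <;> simp [stFun, aFun, stFun_invol]

lemma ga_sq : ga * ga = 1 := by
  apply Subtype.ext; apply Equiv.ext; intro w
  exact aFun_invol w

lemma gb_sq : gb * gb = 1 := by
  apply Subtype.ext; apply Equiv.ext; intro w
  exact stFun_invol .B w

lemma gc_sq : gc * gc = 1 := by
  apply Subtype.ext; apply Equiv.ext; intro w
  exact stFun_invol .C w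

lemma gd_sq : gd * gd = 1 := by
  apply Subtype.ext; apply Equiv.ext; intro w
  exact stFun_invol .D w

lemma gb_gd : gb * gd = gc := by
  apply Subtype.ext; apply Equiv.ext; intro w
  exact (st_triple w).1

lemma gd_gb : gd * gb = gc := by
  apply Subtype.ext; apply Equiv.ext; intro w
  exact st_DB w

lemma gagd_sq_sq : (ga * gd) * (ga * gd) * ((ga * gd) * (ga * gd)) = 1 := by
  apply Subtype.ext; apply Equiv.ext; intro w
  exact adad w

lemma gagd_pow4 : (ga * gd) ^ 4 = 1 := by
  rw [show (4:ℕ) = 2*2 from rfl, pow_mul, pow_two ((ga*gd)^2), pow_two (ga*gd), gagd_sq_sq]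

lemma abab_mem_K : ga * gb * ga * gb ∈ K :=
  Subgroup.subset_normalClosure rfl

/-! #### The finite invariant `rho : Γ →* Perm (Fin 13)` -/

/-- Lookup table for the `K`-orbit classes of pairs of level-3 vertices. -/
def tabL : List (Fin 13) :=
  [0,1,2,3,4,4,5,5,1,0,3,2,4,4,5,5,3,2,0,1,5,5,4,4,2,3,1,0,5,5,4,4,
   6,6,7,7,8,9,10,11,6,6,7,7,9,8,11,10,7,7,6,6,11,10,8,9,7,7,6,6,10,11,9,8]

def enc (w : List Bool) : ℕ := w.foldl (fun n x => 2 * n + cond x 1 0) 0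

/-- Class of a pair of vertices (junk value `12` off level 3 × level 3). -/
def q (p : List Bool × List Bool) : Fin 13 :=
  bif (p.1.length == 3 && p.2.length == 3) then tabL.getD (8 * enc p.1 + enc p.2) 12
  else 12

def permOfList (l : List (Fin 13)) (h1 : ∀ i : Fin 13, l.getD (l.getD i.val 12).val 12 = i) :
    Equiv.Perm (Fin 13) :=
  ⟨fun i => l.getD i.val 12, fun i => l.getD i.val 12, h1, h1⟩

def QA : Equiv.Perm (Fin 13) := permOfList [8,9,10,11,6,7,4,5,0,1,2,3,12] (by decide)
def QB : Equiv.Perm (Fin 13) := permOfList [0,1,3,2,5,4,7,6,8,9,11,10,12] (by decide)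
def QC : Equiv.Perm (Fin 13) := permOfList [0,1,3,2,5,4,7,6,8,9,10,11,12] (by decide)
def QD : Equiv.Perm (Fin 13) := permOfList [0,1,2,3,4,5,6,7,8,9,11,10,12] (by decide)

lemma q_junk {u v : List Bool} (h : ¬(u.length = 3 ∧ v.length = 3)) : q (u, v) = 12 := by
  rcases hb : (u.length == 3 && v.length == 3) with _ | _
  · simp [q, hb]
  · exact absurd (by simpa [Bool.and_eq_true, beq_iff_eq] using hb) h

lemma len3_cases (w : List Bool) (h : w.length = 3) : ∃ x y z, w = [x, y, z] :=
  List.length_eq_three.mp h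

lemma q_equivariant_a : ∀ u v : List Bool, q (aFun u, aFun v) = QA (q (u, v)) := by
  intro u v
  by_cases h : u.length = 3 ∧ v.length = 3
  · obtain ⟨x1, x2, x3, rfl⟩ := len3_cases u h.1
    obtain ⟨y1, y2, y3, rfl⟩ := len3_cases v h.2
    revert x1 x2 x3 y1 y2 y3; decide
  · have h' : ¬((aFun u).length = 3 ∧ (aFun v).length = 3) := by
      rw [aFun_length, aFun_length]; exact h
    rw [q_junk h', q_junk h]; rfl

lemma q_equivariant_st (s : St) (Q : Equiv.Perm (Fin 13))
    (hQ : ∀ x1 x2 x3 y1 y2 y3 : Bool,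
      q (stFun s [x1,x2,x3], stFun s [y1,y2,y3]) = Q (q ([x1,x2,x3], [y1,y2,y3])))
    (hjunk : Q 12 = 12) :
    ∀ u v : List Bool, q (stFun s u, stFun s v) = Q (q (u, v)) := by
  intro u v
  by_cases h : u.length = 3 ∧ v.length = 3
  · obtain ⟨x1, x2, x3, rfl⟩ := len3_cases u h.1
    obtain ⟨y1, y2, y3, rfl⟩ := len3_cases v h.2
    exact hQ x1 x2 x3 y1 y2 y3
  · have h' : ¬((stFun s u).length = 3 ∧ (stFun s v).length = 3) := by
      rw [stFun_length, stFun_length]; exact h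
    rw [q_junk h', q_junk h, hjunk]

lemma q_equivariant_b : ∀ u v : List Bool, q (stFun .B u, stFun .B v) = QB (q (u, v)) :=
  q_equivariant_st .B QB (by decide) (by decide)

lemma q_equivariant_c : ∀ u v : List Bool, q (stFun .C u, stFun .C v) = QC (q (u, v)) :=
  q_equivariant_st .C QC (by decide) (by decide)

lemma q_equivariant_d : ∀ u v : List Bool, q (stFun .D u, stFun .D v) = QD (q (u, v)) :=
  q_equivariant_st .D QD (by decide) (by decide)

/-- The subgroup of permutations of the vertex set compatible with `q`. -/
def HH : Subgroup (Equiv.Perm (List Bool)) where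
  carrier := {σ | ∃ τ : Equiv.Perm (Fin 13), ∀ u v : List Bool, q (σ u, σ v) = τ (q (u, v))}
  one_mem' := ⟨1, fun u v => rfl⟩
  mul_mem' := by
    rintro σ1 σ2 ⟨τ1, h1⟩ ⟨τ2, h2⟩
    exact ⟨τ1 * τ2, fun u v => by
      simp only [Equiv.Perm.mul_apply]; rw [← h2 u v]; exact h1 _ _⟩
  inv_mem' := by
    rintro σ ⟨τ, h⟩
    refine ⟨τ⁻¹, fun u v => ?_⟩
    have hh := h (σ⁻¹ u) (σ⁻¹ v)
    simp only [Equiv.Perm.coe_inv, Equiv.apply_symm_apply] at hh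
    rw [hh]; simp

lemma q_surj : Function.Surjective q := by
  intro y
  fin_cases y
  · exact ⟨([false,false,false],[false,false,false]), rfl⟩
  · exact ⟨([false,false,false],[false,false,true]), rfl⟩
  · exact ⟨([false,false,false],[false,true,false]), rfl⟩
  · exact ⟨([false,false,false],[false,true,true]), rfl⟩
  · exact ⟨([false,false,false],[true,false,false]), rfl⟩
  · exact ⟨([false,false,false],[true,true,false]), rfl⟩
  · exact ⟨([true,false,false],[false,false,false]), rfl⟩
  · exact ⟨([true,false,false],[false,true,false]), rfl⟩
  · exact ⟨([true,false,false],[true,false,false]), rfl⟩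
  · exact ⟨([true,false,false],[true,false,true]), rfl⟩
  · exact ⟨([true,false,false],[true,true,false]), rfl⟩
  · exact ⟨([true,false,false],[true,true,true]), rfl⟩
  · exact ⟨([], []), rfl⟩

lemma tau_unique {σ : Equiv.Perm (List Bool)} {τ τ' : Equiv.Perm (Fin 13)}
    (h : ∀ u v : List Bool, q (σ u, σ v) = τ (q (u, v)))
    (h' : ∀ u v : List Bool, q (σ u, σ v) = τ' (q (u, v))) : τ = τ' := by
  apply Equiv.ext
  intro y
  obtain ⟨p, rfl⟩ := q_surj y
  rw [← h p.1 p.2, h' p.1 p.2]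

lemma HH_spec (σ : HH) :
    ∀ u v : List Bool, q ((σ : Equiv.Perm (List Bool)) u, (σ : Equiv.Perm (List Bool)) v)
      = σ.2.choose (q (u, v)) := σ.2.choose_spec

/-- The induced homomorphism on class permutations. -/
def Phi : HH →* Equiv.Perm (Fin 13) where
  toFun := fun σ => σ.2.choose
  map_one' := tau_unique (HH_spec 1) (fun u v => rfl)
  map_mul' := by
    intro σ1 σ2
    refine tau_unique (HH_spec (σ1 * σ2)) (fun u v => ?_)
    simp only [Subgroup.coe_mul, Equiv.Perm.mul_apply]
    rw [← HH_spec σ2 u v]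
    exact HH_spec σ1 _ _

lemma Grig_le_HH : Grigorchuk ≤ HH := by
  apply (Subgroup.closure_le HH).mpr
  intro x hx
  simp only [Set.mem_insert_iff, Set.mem_singleton_iff] at hx
  rcases hx with rfl | rfl | rfl | rfl
  · exact ⟨QA, q_equivariant_a⟩
  · exact ⟨QB, q_equivariant_b⟩
  · exact ⟨QC, q_equivariant_c⟩
  · exact ⟨QD, q_equivariant_d⟩

def rho : Grigorchuk →* Equiv.Perm (Fin 13) := Phi.comp (Subgroup.inclusion Grig_le_HH)

lemma rho_eq (g : Grigorchuk) (τ : Equiv.Perm (Fin 13))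
    (h : ∀ u v : List Bool, q ((g : Equiv.Perm (List Bool)) u, (g : Equiv.Perm (List Bool)) v)
      = τ (q (u, v))) : rho g = τ :=
  tau_unique (HH_spec (Subgroup.inclusion Grig_le_HH g)) h

lemma rho_ga : rho ga = QA := rho_eq _ _ q_equivariant_a
lemma rho_gb : rho gb = QB := rho_eq _ _ q_equivariant_b
lemma rho_gd : rho gd = QD := rho_eq _ _ q_equivariant_d

lemma K_le_ker : K ≤ rho.ker := by
  apply Subgroup.normalClosure_le_normal
  intro x hx
  rw [Set.mem_singleton_iff] at hx
  subst hx
  have : rho (ga * gb * ga * gb) = 1 := by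
    rw [map_mul, map_mul, map_mul, rho_ga, rho_gb]
    decide
  exact this

def rhoBar : Grigorchuk ⧸ K →* Equiv.Perm (Fin 13) := QuotientGroup.lift K rho K_le_ker

lemma rhoBar_mk (g : Grigorchuk) : rhoBar ((QuotientGroup.mk' K) g) = rho g := rfl

end Grig

end Aux


section Aux2

/-! #### Generic lemmas on groups generated by involutions -/

namespace Grig

variable {G : Type*} [Group G]

lemma invol_inv {g : G} (h : g * g = 1) : g⁻¹ = g := inv_eq_of_mul_eq_one_right h

lemma comm_of_invol {g h : G} (hg : g * g = 1) (hh : h * h = 1)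
    (hgh : (g * h) * (g * h) = 1) : h * g = g * h := by
  have h1 : (g * h)⁻¹ = g * h := invol_inv hgh
  rw [mul_inv_rev, invol_inv hg, invol_inv hh] at h1
  exact h1

section Dihedral

variable {A D : G} (hA : A * A = 1) (hD : D * D = 1) (hT : (A * D) ^ 4 = 1)

include hA hD hT

lemma dihedral_T_inv : (A * D)⁻¹ = (A * D) ^ 3 := by
  apply inv_eq_of_mul_eq_one_right
  rw [← pow_succ']
  exact hT

lemma dihedral_D_eq : (A * D) ^ 3 * A = D := by
  rw [← dihedral_T_inv hA hD hT, mul_inv_rev, invol_inv hA, invol_inv hD,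
    mul_assoc, hA, mul_one]

lemma dihedral_semi : ∀ n : ℕ, A * (A * D) ^ n = (A * D) ^ (3 * n) * A := by
  have key : SemiconjBy A (A * D) ((A * D) ^ 3) := by
    unfold SemiconjBy
    rw [dihedral_D_eq hA hD hT, ← mul_assoc, hA, one_mul]
  intro n
  have h2 := (key.pow_right n).eq
  rw [← pow_mul] at h2
  exact h2

lemma dihedral_mul (j j' : ℕ) (k k' : Bool) : ∃ (j'' : ℕ) (k'' : Bool),
    ((A * D) ^ j * cond k A 1) * ((A * D) ^ j' * cond k' A 1)
      = (A * D) ^ j'' * cond k'' A 1 := by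
  cases k with
  | false =>
    refine ⟨j + j', k', ?_⟩
    rw [pow_add]
    simp [mul_assoc]
  | true =>
    cases k' with
    | false =>
      refine ⟨j + 3 * j', true, ?_⟩
      simp only [cond, mul_one]
      rw [mul_assoc, dihedral_semi hA hD hT j', pow_add, mul_assoc]
    | true =>
      refine ⟨j + 3 * j', false, ?_⟩
      simp only [cond, mul_one]
      rw [mul_assoc ((A * D) ^ j) A _, ← mul_assoc A ((A * D) ^ j') A,
        dihedral_semi hA hD hT j', mul_assoc ((A * D) ^ (3 * j')) A A, hA, mul_one,
        ← pow_add]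

lemma dihedral_inv (j : ℕ) (k : Bool) : ∃ (j' : ℕ) (k' : Bool),
    ((A * D) ^ j * cond k A 1)⁻¹ = (A * D) ^ j' * cond k' A 1 := by
  have hTj : ((A * D) ^ j)⁻¹ = (A * D) ^ (3 * j) := by
    rw [← inv_pow, dihedral_T_inv hA hD hT, ← pow_mul]
  cases k with
  | false =>
    refine ⟨3 * j, false, ?_⟩
    simp [hTj]
  | true =>
    refine ⟨3 * (3 * j), true, ?_⟩
    simp only [cond, mul_inv_rev, invol_inv hA, hTj]
    rw [dihedral_semi hA hD hT]

lemma dihedral_decomp {u : G} (hu : u ∈ Subgroup.closure {A, D}) :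
    ∃ (j : ℕ) (k : Bool), u = (A * D) ^ j * cond k A 1 := by
  induction hu using Subgroup.closure_induction with
  | mem x hx =>
    rcases hx with rfl | rfl
    · exact ⟨0, true, by simp⟩
    · exact ⟨3, true, (dihedral_D_eq hA hD hT).symm⟩
  | one => exact ⟨0, false, by simp⟩
  | mul x y hx hy ihx ihy =>
    obtain ⟨j, k, rfl⟩ := ihx
    obtain ⟨j', k', rfl⟩ := ihy
    exact (dihedral_mul hA hD hT j j' k k').imp (fun j'' h => h.imp fun k'' h => h)
  | inv x hx ihx =>
    obtain ⟨j, k, rfl⟩ := ihx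
    exact dihedral_inv hA hD hT j k

end Dihedral

/-! #### The presented group -/

local notation "PG" => PresentedGroup grigRels

lemma relP {r : FreeGroup (Fin 3)} (h : r ∈ grigRels) : (QuotientGroup.mk r : PG) = 1 :=
  (QuotientGroup.eq_one_iff r).mpr (Subgroup.subset_normalClosure h)

def px : PG := PresentedGroup.of 0
def py : PG := PresentedGroup.of 1
def pz : PG := PresentedGroup.of 2

lemma px_sq : px * px = 1 := by
  rw [show px * px = (QuotientGroup.mk ((FreeGroup.of 0) ^ 2) : PG) by rw [pow_two]; rfl]
  exact relP (by simp [grigRels])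

lemma py_sq : py * py = 1 := by
  rw [show py * py = (QuotientGroup.mk ((FreeGroup.of 1) ^ 2) : PG) by rw [pow_two]; rfl]
  exact relP (by simp [grigRels])

lemma pz_sq : pz * pz = 1 := by
  rw [show pz * pz = (QuotientGroup.mk ((FreeGroup.of 2) ^ 2) : PG) by rw [pow_two]; rfl]
  exact relP (by simp [grigRels])

lemma pxy_sq : (px * py) * (px * py) = 1 := by
  rw [show (px * py) * (px * py)
      = (QuotientGroup.mk ((FreeGroup.of 0 * FreeGroup.of 1) ^ 2) : PG) by rw [pow_two]; rfl]
  exact relP (by simp [grigRels])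

lemma pyz_sq : (py * pz) * (py * pz) = 1 := by
  rw [show (py * pz) * (py * pz)
      = (QuotientGroup.mk ((FreeGroup.of 1 * FreeGroup.of 2) ^ 2) : PG) by rw [pow_two]; rfl]
  exact relP (by simp [grigRels])

lemma pxz_pow4 : (px * pz) ^ 4 = 1 := by
  change (QuotientGroup.mk ((FreeGroup.of 0 * FreeGroup.of 2) ^ 4) : PG) = 1
  exact relP (by simp [grigRels])

lemma PG_decomp : ∀ p : PG, ∃ (i : Bool) (j : ℕ) (k : Bool),
    p = cond i py 1 * ((px * pz) ^ j * cond k px 1) := by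
  have hyx : Commute py px := comm_of_invol px_sq py_sq pxy_sq
  have hyz : Commute py pz := ((comm_of_invol py_sq pz_sq pyz_sq).symm : py * pz = pz * py)
  have hyc : ∀ (j : ℕ) (k : Bool), Commute py ((px * pz) ^ j * cond k px 1) := by
    intro j k
    refine Commute.mul_right (Commute.pow_right (Commute.mul_right hyx hyz) j) ?_
    cases k
    · exact Commute.one_right py
    · exact hyx
  have hcond : ∀ (i i' : Bool), cond i py 1 * cond i' py 1 = cond (xor i i') py 1 := by
    intro i i'
    cases i <;> cases i' <;> simp [py_sq]
  have hswap : ∀ (i'' : Bool) (j0 : ℕ) (k0 : Bool),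
      ((px * pz) ^ j0 * cond k0 px 1) * cond i'' py 1
        = cond i'' py 1 * ((px * pz) ^ j0 * cond k0 px 1) := by
    intro i'' j0 k0
    cases i''
    · simp
    · exact ((hyc j0 k0).eq).symm
  intro p
  induction p using QuotientGroup.induction_on with
  | _ w =>
  show ∃ (i : Bool) (j : ℕ) (k : Bool),
    (QuotientGroup.mk w : PG) = cond i py 1 * ((px * pz) ^ j * cond k px 1)
  induction w using FreeGroup.induction_on with
  | C1 => exact ⟨false, 0, false, by simp; rfl⟩
  | of x =>
    fin_cases x
    · exact ⟨false, 0, true, by simp; rfl⟩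
    · exact ⟨true, 0, false, by simp; rfl⟩
    · refine ⟨false, 3, true, ?_⟩
      simp only [cond, one_mul]
      exact (dihedral_D_eq px_sq pz_sq pxz_pow4).symm
  | inv_of x ih =>
    obtain ⟨i, j, k, hw⟩ := ih
    have h1 : ((QuotientGroup.mk (FreeGroup.of x)⁻¹ : PG))
        = @Inv.inv PG _ (QuotientGroup.mk (FreeGroup.of x)) := rfl
    rw [h1, hw, mul_inv_rev]
    obtain ⟨j', k', h2⟩ := dihedral_inv px_sq pz_sq pxz_pow4 j k
    rw [h2]
    have h3 : (cond i py 1)⁻¹ = cond i py 1 := by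
      cases i
      · simp
      · exact invol_inv py_sq
    rw [h3, hswap i j' k']
    exact ⟨i, j', k', rfl⟩
  | mul x y ihx ihy =>
    obtain ⟨i, j, k, hx⟩ := ihx
    obtain ⟨i', j', k', hy⟩ := ihy
    have h1 : (QuotientGroup.mk (x * y) : PG)
        = @HMul.hMul PG PG PG _ (QuotientGroup.mk x) (QuotientGroup.mk y) := rfl
    rw [h1, hx, hy]
    obtain ⟨j'', k'', h2⟩ := dihedral_mul px_sq pz_sq pxz_pow4 j j' k k'
    refine ⟨xor i i', j'', k'', ?_⟩
    rw [mul_assoc, ← mul_assoc ((px * pz) ^ j * cond k px 1) (cond i' py 1) _,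
      hswap i' j k, mul_assoc (cond i' py 1) _ _,
      ← mul_assoc (cond i py 1) (cond i' py 1) _, hcond, h2]

end Grig

end Aux2


section Aux3

namespace Grig

local notation "PG" => PresentedGroup grigRels
local notation "mkK" => QuotientGroup.mk' K

/-! #### Relations in `Γ/K` -/

lemma mk_ga_sq : mkK ga * mkK ga = 1 := by rw [← map_mul, ga_sq, map_one]
lemma mk_gb_sq : mkK gb * mkK gb = 1 := by rw [← map_mul, gb_sq, map_one]
lemma mk_gd_sq : mkK gd * mkK gd = 1 := by rw [← map_mul, gd_sq, map_one]

lemma mk_gagb_sq : (mkK ga * mkK gb) * (mkK ga * mkK gb) = 1 := by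
  rw [← map_mul, ← map_mul]
  rw [show ga * gb * (ga * gb) = ga * gb * ga * gb from (mul_assoc _ _ _).symm]
  exact (QuotientGroup.eq_one_iff _).mpr abab_mem_K

lemma mk_gbgd_sq : (mkK gb * mkK gd) * (mkK gb * mkK gd) = 1 := by
  rw [← map_mul, ← map_mul, gb_gd, gc_sq, map_one]

lemma mk_gagd_pow4 : (mkK ga * mkK gd) ^ 4 = 1 := by
  rw [← map_mul, ← map_pow, gagd_pow4, map_one]

lemma mk_gc_eq : mkK gc = mkK gb * mkK gd := by rw [← map_mul, gb_gd]

lemma mk_gb_comm_ga : mkK gb * mkK ga = mkK ga * mkK gb := by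
  rw [← map_mul, ← map_mul]
  have h1 : (gb * ga)⁻¹ * (ga * gb) = ga * gb * ga * gb := by
    rw [mul_inv_rev, invol_inv ga_sq, invol_inv gb_sq, ← mul_assoc]
  exact (QuotientGroup.eq (s := K)).mpr (h1 ▸ abab_mem_K)

lemma mk_gb_comm_gd : mkK gb * mkK gd = mkK gd * mkK gb := by
  rw [← map_mul, ← map_mul, gb_gd, gd_gb]

/-! #### The homomorphism `θ : PG → Γ/K` -/

def gfun : Fin 3 → Grigorchuk ⧸ K
  | 0 => mkK ga
  | 1 => mkK gb
  | 2 => mkK gd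

lemma grels_hold : ∀ r ∈ grigRels, (FreeGroup.lift gfun) r = 1 := by
  intro r hr
  simp only [grigRels, Set.mem_insert_iff, Set.mem_singleton_iff] at hr
  rcases hr with rfl | rfl | rfl | rfl | rfl | rfl
  · rw [map_pow, FreeGroup.lift_apply_of, pow_two]; exact mk_ga_sq
  · rw [map_pow, FreeGroup.lift_apply_of, pow_two]; exact mk_gb_sq
  · rw [map_pow, FreeGroup.lift_apply_of, pow_two]; exact mk_gd_sq
  · rw [map_pow, map_mul, FreeGroup.lift_apply_of, FreeGroup.lift_apply_of, pow_two]; exact mk_gagb_sq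
  · rw [map_pow, map_mul, FreeGroup.lift_apply_of, FreeGroup.lift_apply_of, pow_two]; exact mk_gbgd_sq
  · rw [map_pow, map_mul, FreeGroup.lift_apply_of, FreeGroup.lift_apply_of]; exact mk_gagd_pow4

def theta : PG →* Grigorchuk ⧸ K := PresentedGroup.toGroup grels_hold

lemma theta_of0 : theta (PresentedGroup.of 0) = mkK ga := PresentedGroup.toGroup.of grels_hold
lemma theta_of1 : theta (PresentedGroup.of 1) = mkK gb := PresentedGroup.toGroup.of grels_hold
lemma theta_of2 : theta (PresentedGroup.of 2) = mkK gd := PresentedGroup.toGroup.of grels_hold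

lemma mem_gen_cases (z : Grigorchuk)
    (hz : (z : Equiv.Perm (List Bool)) ∈ ({a, b, c, d} : Set (Equiv.Perm (List Bool)))) :
    z = ga ∨ z = gb ∨ z = gc ∨ z = gd := by
  simp only [Set.mem_preimage, Set.mem_insert_iff, Set.mem_singleton_iff] at hz
  rcases hz with h | h | h | h
  · exact Or.inl (Subtype.ext h)
  · exact Or.inr (Or.inl (Subtype.ext h))
  · exact Or.inr (Or.inr (Or.inl (Subtype.ext h)))
  · exact Or.inr (Or.inr (Or.inr (Subtype.ext h)))

lemma theta_surj : Function.Surjective theta := by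
  intro g
  obtain ⟨x, rfl⟩ := QuotientGroup.mk'_surjective K g
  have hx : x ∈ Subgroup.closure
      ((Subgroup.closure ({a, b, c, d} : Set (Equiv.Perm (List Bool)))).subtype ⁻¹'
        {a, b, c, d}) := by
    rw [Subgroup.closure_preimage_eq_top]; trivial
  induction hx using Subgroup.closure_induction with
  | mem z hz =>
    rcases mem_gen_cases z hz with rfl | rfl | rfl | rfl
    · exact ⟨PresentedGroup.of 0, theta_of0⟩
    · exact ⟨PresentedGroup.of 1, theta_of1⟩
    · exact ⟨PresentedGroup.of 1 * PresentedGroup.of 2, by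
        rw [map_mul, theta_of1, theta_of2, ← mk_gc_eq]⟩
    · exact ⟨PresentedGroup.of 2, theta_of2⟩
  | one => exact ⟨1, by rw [map_one, map_one]⟩
  | mul u v hu hv ihu ihv =>
    obtain ⟨p, hp⟩ := ihu
    obtain ⟨p', hp'⟩ := ihv
    exact ⟨p * p', by rw [map_mul, hp, hp', map_mul]⟩
  | inv u hu ihu =>
    obtain ⟨p, hp⟩ := ihu
    exact ⟨p⁻¹, by rw [map_inv, hp]; rfl⟩

/-! #### Cardinalities -/

def pgF : Fin 2 × Fin 4 × Fin 2 → PG :=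
  fun v => py ^ (v.1 : ℕ) * ((px * pz) ^ (v.2.1 : ℕ) * px ^ (v.2.2 : ℕ))

lemma pgF_surj : Function.Surjective pgF := by
  intro p
  obtain ⟨i, j, k, rfl⟩ := PG_decomp p
  refine ⟨(⟨cond i 1 0, by cases i <;> norm_num⟩,
           ⟨j % 4, Nat.mod_lt _ (by norm_num)⟩,
           ⟨cond k 1 0, by cases k <;> norm_num⟩), ?_⟩
  show py ^ (cond i 1 0) * ((px * pz) ^ (j % 4) * px ^ (cond k 1 0)) = _
  rw [← pow_eq_pow_mod j pxz_pow4]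
  congr 1
  · cases i <;> simp
  · congr 1
    cases k <;> simp

lemma finite_PG : Finite PG := Finite.of_surjective pgF pgF_surj

lemma card_16 : Nat.card (Fin 2 × Fin 4 × Fin 2) = 16 := by simp

lemma card_PG_le : Nat.card PG ≤ 16 := by
  haveI := finite_PG
  calc Nat.card PG ≤ Nat.card (Fin 2 × Fin 4 × Fin 2) :=
        Nat.card_le_card_of_surjective pgF pgF_surj
    _ = 16 := card_16

def VV : Fin 2 × Fin 4 × Fin 2 → Equiv.Perm (Fin 13) :=
  fun v => QB ^ (v.1 : ℕ) * ((QA * QD) ^ (v.2.1 : ℕ) * QA ^ (v.2.2 : ℕ))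

def dec16 (e : Equiv.Perm (Fin 13)) : Fin 2 × Fin 4 × Fin 2 :=
  match (e 2).val, (e 4).val, (e 10).val with
  | 2, 4, 10 => (0, 0, 0)
  | 10, 6, 2 => (0, 0, 1)
  | 10, 6, 3 => (0, 1, 0)
  | 3, 4, 10 => (0, 1, 1)
  | 3, 4, 11 => (0, 2, 0)
  | 11, 6, 3 => (0, 2, 1)
  | 11, 6, 2 => (0, 3, 0)
  | 2, 4, 11 => (0, 3, 1)
  | 3, 5, 11 => (1, 0, 0)
  | 11, 7, 3 => (1, 0, 1)
  | 11, 7, 2 => (1, 1, 0)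
  | 2, 5, 11 => (1, 1, 1)
  | 2, 5, 10 => (1, 2, 0)
  | 10, 7, 2 => (1, 2, 1)
  | 10, 7, 3 => (1, 3, 0)
  | 3, 5, 10 => (1, 3, 1)
  | _, _, _ => (0, 0, 0)

lemma dec16_VV : ∀ v, dec16 (VV v) = v := by decide

lemma VV_inj : Function.Injective VV := fun v w h => by
  rw [← dec16_VV v, ← dec16_VV w, h]

def eGamma : Fin 2 × Fin 4 × Fin 2 → Grigorchuk ⧸ K :=
  fun v => (mkK gb) ^ (v.1 : ℕ) * ((mkK ga * mkK gd) ^ (v.2.1 : ℕ) * (mkK ga) ^ (v.2.2 : ℕ))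

lemma rhoBar_eGamma : ∀ v, rhoBar (eGamma v) = VV v := by
  intro v
  simp only [eGamma, VV, map_mul, map_pow, rhoBar_mk, rho_ga, rho_gb, rho_gd]

lemma eGamma_inj : Function.Injective eGamma := fun v w h =>
  VV_inj (by rw [← rhoBar_eGamma, ← rhoBar_eGamma, h])

lemma finite_Q : Finite (Grigorchuk ⧸ K) := by
  haveI := finite_PG
  exact Finite.of_surjective theta theta_surj

lemma card_Q : Nat.card (Grigorchuk ⧸ K) = 16 := by
  haveI := finite_PG
  haveI := finite_Q
  refine le_antisymm ?_ ?_
  · exact le_trans (Nat.card_le_card_of_surjective theta theta_surj) card_PG_le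
  · calc (16 : ℕ) = Nat.card (Fin 2 × Fin 4 × Fin 2) := card_16.symm
      _ ≤ Nat.card (Grigorchuk ⧸ K) := Nat.card_le_card_of_injective eGamma eGamma_inj

lemma card_PG : Nat.card PG = 16 := by
  haveI := finite_PG
  refine le_antisymm card_PG_le ?_
  calc (16 : ℕ) = Nat.card (Grigorchuk ⧸ K) := card_Q.symm
    _ ≤ Nat.card PG := Nat.card_le_card_of_surjective theta theta_surj

lemma theta_bij : Function.Bijective theta := by
  haveI := finite_PG
  exact (Nat.bijective_iff_surjective_and_card theta).mpr
    ⟨theta_surj, by rw [card_PG, card_Q]⟩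

/-! #### The subgroup `⟨b̄⟩` -/

lemma QB_ne_one : QB ≠ 1 := by decide

lemma mk_gb_ne_one : mkK gb ≠ 1 := by
  intro h
  have h2 := congrArg rhoBar h
  rw [rhoBar_mk, rho_gb, map_one] at h2
  exact QB_ne_one h2

lemma orderOf_mk_gb : orderOf (mkK gb) = 2 :=
  orderOf_eq_prime (by rw [pow_two, mk_gb_sq]) mk_gb_ne_one

/-! #### The subgroup `⟨ā, d̄⟩` -/

def Dsub : Subgroup (Grigorchuk ⧸ K) := Subgroup.closure {mkK ga, mkK gd}

lemma mk_ga_mem : mkK ga ∈ Dsub := Subgroup.subset_closure (Set.mem_insert _ _)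
lemma mk_gd_mem : mkK gd ∈ Dsub := Subgroup.subset_closure (Set.mem_insert_of_mem _ rfl)

def dD : Fin 4 × Fin 2 → Grigorchuk ⧸ K :=
  fun v => (mkK ga * mkK gd) ^ (v.1 : ℕ) * (mkK ga) ^ (v.2 : ℕ)

lemma dD_mem : ∀ v, dD v ∈ Dsub := fun v =>
  Subgroup.mul_mem _ (Subgroup.pow_mem _ (Subgroup.mul_mem _ mk_ga_mem mk_gd_mem) _)
    (Subgroup.pow_mem _ mk_ga_mem _)

def VD : Fin 4 × Fin 2 → Equiv.Perm (Fin 13) :=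
  fun v => (QA * QD) ^ (v.1 : ℕ) * QA ^ (v.2 : ℕ)

def dec8 (e : Equiv.Perm (Fin 13)) : Fin 4 × Fin 2 :=
  match (e 2).val, (e 10).val with
  | 2, 10 => (0, 0)
  | 10, 2 => (0, 1)
  | 10, 3 => (1, 0)
  | 3, 10 => (1, 1)
  | 3, 11 => (2, 0)
  | 11, 3 => (2, 1)
  | 11, 2 => (3, 0)
  | 2, 11 => (3, 1)
  | _, _ => (0, 0)

lemma dec8_VD : ∀ v, dec8 (VD v) = v := by decide

lemma rhoBar_dD : ∀ v, rhoBar (dD v) = VD v := by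
  intro v
  simp only [dD, VD, map_mul, map_pow, rhoBar_mk, rho_ga, rho_gd]

lemma dD_inj : Function.Injective dD := fun v w h => by
  have h2 : VD v = VD w := by rw [← rhoBar_dD, ← rhoBar_dD, h]
  rw [← dec8_VD v, ← dec8_VD w, h2]

def dF : Fin 4 × Fin 2 → Dsub := fun v => ⟨dD v, dD_mem v⟩

lemma dF_inj : Function.Injective dF := fun v w h =>
  dD_inj (congrArg Subtype.val h)

lemma dF_surj : Function.Surjective dF := by
  rintro ⟨u, hu⟩
  obtain ⟨j, k, hjk⟩ := dihedral_decomp mk_ga_sq mk_gd_sq mk_gagd_pow4 hu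
  refine ⟨(⟨j % 4, Nat.mod_lt _ (by norm_num)⟩, ⟨cond k 1 0, by cases k <;> norm_num⟩),
    Subtype.ext ?_⟩
  show (mkK ga * mkK gd) ^ (j % 4) * (mkK ga) ^ (cond k 1 0) = u
  rw [← pow_eq_pow_mod j mk_gagd_pow4, hjk]
  congr 1
  cases k <;> simp

lemma card_Dsub : Nat.card Dsub = 8 := by
  haveI := finite_Q
  refine le_antisymm ?_ ?_
  · calc Nat.card Dsub ≤ Nat.card (Fin 4 × Fin 2) :=
        Nat.card_le_card_of_surjective dF dF_surj
      _ = 8 := by simp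
  · calc (8 : ℕ) = Nat.card (Fin 4 × Fin 2) := by simp
      _ ≤ Nat.card Dsub := Nat.card_le_card_of_injective dF dF_inj

/-! #### `Dsub` is dihedral of order 8 -/

lemma hTpow_cast (m : ℕ) (u : ZMod 4) (h : (m : ZMod 4) = u) :
    (mkK ga * mkK gd) ^ m = (mkK ga * mkK gd) ^ u.val := by
  subst h
  rw [ZMod.val_natCast]
  exact pow_eq_pow_mod m mk_gagd_pow4

lemma hsemiQ : ∀ n : ℕ, mkK ga * (mkK ga * mkK gd) ^ n
    = (mkK ga * mkK gd) ^ (3 * n) * mkK ga :=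
  dihedral_semi mk_ga_sq mk_gd_sq mk_gagd_pow4

lemma h40 : (4 : ZMod 4) = 0 := by decide

def fDihFun : DihedralGroup 4 → Grigorchuk ⧸ K
  | .r i => (mkK ga * mkK gd) ^ i.val
  | .sr i => (mkK ga * mkK gd) ^ (-i).val * mkK ga

def fDih : DihedralGroup 4 →* Grigorchuk ⧸ K :=
  MonoidHom.mk' fDihFun (by
    intro g h
    cases g with
    | r i =>
      cases h with
      | r j =>
        show (mkK ga * mkK gd) ^ (i + j).val
          = (mkK ga * mkK gd) ^ i.val * (mkK ga * mkK gd) ^ j.val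
        rw [← pow_add]
        exact (hTpow_cast _ _ (by
          push_cast [ZMod.natCast_val, ZMod.cast_id]; ring)).symm
      | sr j =>
        show (mkK ga * mkK gd) ^ (-(j - i)).val * mkK ga
          = (mkK ga * mkK gd) ^ i.val * ((mkK ga * mkK gd) ^ (-j).val * mkK ga)
        rw [← mul_assoc, ← pow_add]
        refine congrArg (· * mkK ga) ?_
        exact (hTpow_cast _ _ (by
          push_cast [ZMod.natCast_val, ZMod.cast_id]; ring)).symm
    | sr i =>
      cases h with
      | r j =>
        show (mkK ga * mkK gd) ^ (-(i + j)).val * mkK ga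
          = ((mkK ga * mkK gd) ^ (-i).val * mkK ga) * (mkK ga * mkK gd) ^ j.val
        rw [mul_assoc, hsemiQ, ← mul_assoc, ← pow_add]
        refine congrArg (· * mkK ga) ?_
        refine (hTpow_cast _ _ ?_).symm
        push_cast [ZMod.natCast_val, ZMod.cast_id]
        linear_combination (j : ZMod 4) * h40
      | sr j =>
        show (mkK ga * mkK gd) ^ (j - i).val
          = ((mkK ga * mkK gd) ^ (-i).val * mkK ga)
            * ((mkK ga * mkK gd) ^ (-j).val * mkK ga)
        rw [mul_assoc, ← mul_assoc (mkK ga), hsemiQ, mul_assoc _ (mkK ga) (mkK ga),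
          mk_ga_sq, mul_one, ← pow_add]
        refine (hTpow_cast _ _ ?_).symm
        push_cast [ZMod.natCast_val, ZMod.cast_id]
        linear_combination (-(j : ZMod 4)) * h40)

lemma fDih_mem : ∀ g, fDih g ∈ Dsub := by
  intro g
  cases g with
  | r i =>
    show (mkK ga * mkK gd) ^ i.val ∈ Dsub
    exact Subgroup.pow_mem _ (Subgroup.mul_mem _ mk_ga_mem mk_gd_mem) _
  | sr i =>
    show (mkK ga * mkK gd) ^ (-i).val * mkK ga ∈ Dsub
    exact Subgroup.mul_mem _
      (Subgroup.pow_mem _ (Subgroup.mul_mem _ mk_ga_mem mk_gd_mem) _) mk_ga_mem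

def fDih' : DihedralGroup 4 →* Dsub := fDih.codRestrict Dsub fDih_mem

lemma fDih'_surj : Function.Surjective fDih' := by
  rintro ⟨u, hu⟩
  obtain ⟨j, k, hjk⟩ := dihedral_decomp mk_ga_sq mk_gd_sq mk_gagd_pow4 hu
  cases k with
  | false =>
    refine ⟨.r (j : ZMod 4), Subtype.ext ?_⟩
    show (mkK ga * mkK gd) ^ ((j : ZMod 4)).val = u
    rw [ZMod.val_natCast, ← pow_eq_pow_mod j mk_gagd_pow4, hjk]
    simp
  | true =>
    refine ⟨.sr (-(j : ZMod 4)), Subtype.ext ?_⟩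
    show (mkK ga * mkK gd) ^ (-(-(j : ZMod 4))).val * mkK ga = u
    rw [neg_neg, ZMod.val_natCast, ← pow_eq_pow_mod j mk_gagd_pow4, hjk]
    simp

lemma card_dih : Nat.card (DihedralGroup 4) = 8 := by
  rw [Nat.card_eq_fintype_card]
  decide

lemma fDih'_bij : Function.Bijective fDih' :=
  (Nat.bijective_iff_surjective_and_card fDih').mpr
    ⟨fDih'_surj, by rw [card_dih, card_Dsub]⟩

/-! #### Commutation and lattice facts -/

lemma mk_gb_comm : ∀ u ∈ Dsub, Commute (mkK gb) u := by
  intro u hu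
  induction hu using Subgroup.closure_induction with
  | mem z hz =>
    rcases hz with rfl | rfl
    · exact mk_gb_comm_ga
    · exact mk_gb_comm_gd
  | one => exact Commute.one_right _
  | mul u v hu hv ihu ihv => exact ihu.mul_right ihv
  | inv u hu ihu => exact ihu.inv_right

lemma QAD4 : (QA * QD) ^ 4 = 1 := by decide

lemma mk_gb_not_mem_Dsub : mkK gb ∉ Dsub := by
  intro h
  obtain ⟨j, k, hjk⟩ := dihedral_decomp mk_ga_sq mk_gd_sq mk_gagd_pow4 h
  have hlt : j % 4 < 4 := Nat.mod_lt _ (by norm_num)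
  cases k with
  | false =>
    simp only [cond, mul_one] at hjk
    have h2 := congrArg rhoBar hjk
    simp only [map_mul, map_pow, rhoBar_mk, rho_gb, rho_ga, rho_gd] at h2
    rw [pow_eq_pow_mod j QAD4] at h2
    set m := j % 4 with hm
    clear_value m
    interval_cases m <;> revert h2 <;> decide
  | true =>
    simp only [cond] at hjk
    have h2 := congrArg rhoBar hjk
    simp only [map_mul, map_pow, rhoBar_mk, rho_gb, rho_ga, rho_gd] at h2
    rw [pow_eq_pow_mod j QAD4] at h2
    set m := j % 4 with hm
    clear_value m
    interval_cases m <;> revert h2 <;> decide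

end Grig

end Aux3

/-- **Lemma 2.1.** `K` has index `16` in `Γ`; the quotient `Γ/K` has the presentation
`⟨a, b, d | a² = b² = d² = (ab)² = (bd)² = (ad)⁴ = 1⟩` (via `a ↦ aK`, `b ↦ bK`,
`d ↦ dK`); and `Γ/K` is the internal direct product of the subgroup `⟨bK⟩` of order `2`
and the subgroup `⟨aK, dK⟩`, which is a dihedral group of order `8`. -/
theorem Grig.K_index_and_quotient :
    K.index = 16 ∧
    (∃ e : PresentedGroup grigRels ≃* Grigorchuk ⧸ K,
      e (PresentedGroup.of 0) = (QuotientGroup.mk' K) ga ∧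
      e (PresentedGroup.of 1) = (QuotientGroup.mk' K) gb ∧
      e (PresentedGroup.of 2) = (QuotientGroup.mk' K) gd) ∧
    (Nat.card (Subgroup.zpowers ((QuotientGroup.mk' K) gb)) = 2 ∧
     Nat.card (Subgroup.closure {(QuotientGroup.mk' K) ga, (QuotientGroup.mk' K) gd}) = 8 ∧
     Nonempty ((Subgroup.closure {(QuotientGroup.mk' K) ga, (QuotientGroup.mk' K) gd}) ≃*
        DihedralGroup 4) ∧
     Subgroup.zpowers ((QuotientGroup.mk' K) gb) ⊔
        Subgroup.closure {(QuotientGroup.mk' K) ga, (QuotientGroup.mk' K) gd} = ⊤ ∧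
     Subgroup.zpowers ((QuotientGroup.mk' K) gb) ⊓
        Subgroup.closure {(QuotientGroup.mk' K) ga, (QuotientGroup.mk' K) gd} = ⊥ ∧
     ∀ x ∈ Subgroup.zpowers ((QuotientGroup.mk' K) gb),
       ∀ y ∈ Subgroup.closure {(QuotientGroup.mk' K) ga, (QuotientGroup.mk' K) gd},
         Commute x y) := by
  haveI := Grig.finite_PG
  haveI := Grig.finite_Q
  have hindex : K.index = 16 := by
    rw [show K.index = Nat.card (Grigorchuk ⧸ K) from rfl]
    exact card_Q
  refine ⟨hindex, ⟨MulEquiv.ofBijective theta theta_bij, theta_of0, theta_of1, theta_of2⟩,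
    ?_, card_Dsub, ⟨(MulEquiv.ofBijective fDih' fDih'_bij).symm⟩, ?_, ?_, ?_⟩
  · rw [Nat.card_zpowers]; exact orderOf_mk_gb
  · -- sup = ⊤
    refine (Subgroup.eq_top_iff' _).mpr ?_
    intro g
    obtain ⟨x, rfl⟩ := QuotientGroup.mk'_surjective K g
    have hx : x ∈ Subgroup.closure
        ((Subgroup.closure ({a, b, c, d} : Set (Equiv.Perm (List Bool)))).subtype ⁻¹'
          {a, b, c, d}) := by
      rw [Subgroup.closure_preimage_eq_top]; trivial
    induction hx using Subgroup.closure_induction with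
    | mem z hz =>
      rcases mem_gen_cases z hz with rfl | rfl | rfl | rfl
      · exact Subgroup.mem_sup_right mk_ga_mem
      · exact Subgroup.mem_sup_left (Subgroup.mem_zpowers _)
      · rw [show (QuotientGroup.mk' K) gc = (QuotientGroup.mk' K) gb * (QuotientGroup.mk' K) gd
            from mk_gc_eq]
        exact Subgroup.mul_mem _ (Subgroup.mem_sup_left (Subgroup.mem_zpowers _))
          (Subgroup.mem_sup_right mk_gd_mem)
      · exact Subgroup.mem_sup_right mk_gd_mem
    | one => exact Subgroup.one_mem _
    | mul u v hu hv ihu ihv => rw [map_mul]; exact Subgroup.mul_mem _ ihu ihv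
    | inv u hu ihu => change ((QuotientGroup.mk' K) u)⁻¹ ∈ _; exact Subgroup.inv_mem _ ihu
  · -- inf = ⊥
    rw [eq_bot_iff]
    intro x hx
    obtain ⟨hz, hD⟩ := Subgroup.mem_inf.mp hx
    obtain ⟨n, rfl⟩ := Subgroup.mem_zpowers_iff.mp hz
    rcases Int.emod_two_eq n with h | h
    · have h1 : ((QuotientGroup.mk' K) gb) ^ n = 1 := by
        rw [← zpow_mod_orderOf, orderOf_mk_gb]
        norm_num
        rw [h, zpow_zero]
      exact (Subgroup.mem_bot).mpr h1
    · have h1 : ((QuotientGroup.mk' K) gb) ^ n = (QuotientGroup.mk' K) gb := by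
        rw [← zpow_mod_orderOf, orderOf_mk_gb]
        norm_num
        rw [h, zpow_one]
      exact absurd (h1 ▸ hD) mk_gb_not_mem_Dsub
  · -- commutation
    intro x hx y hy
    obtain ⟨n, rfl⟩ := Subgroup.mem_zpowers_iff.mp hx
    exact (mk_gb_comm y hy).zpow_left n
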